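/- For every odd natural number n ≥ 1 and every real φ such that φ + πl/n is not an integer multiple of π for any l = 0,...,n−1, one has ∑_{l=0}^{n-1} (−1)^l·csc(φ + πl/n) = n·csc(nφ). -/

import Mathlib

open Real Finset

open Complex in
theorem sinExpKey (z : ℂ) : Complex.exp (2*z*I) - 1 = Complex.exp (z*I) * (2*I*Complex.sin z) := by
  have h2 : Complex.exp (z*I) * Complex.exp (-z*I) = 1 := by
    rw [← Complex.exp_add]; ring_nf; exact Complex.exp_zero
  rw [Complex.sin, show (2:ℂ)*z*I = z*I + z*I by ring, Complex.exp_add]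
  linear_combination h2 + Complex.exp (z*I) * (Complex.exp (z*I) - Complex.exp (-z*I)) * Complex.I_sq

open Complex in
theorem invSin (z : ℂ) (hz : Complex.sin z ≠ 0) :
    (Complex.sin z)⁻¹ = 2*I*Complex.exp (z*I) / (Complex.exp (2*z*I) - 1) := by
  have hne : Complex.exp (z*I) * (2*I*Complex.sin z) ≠ 0 := by
    apply mul_ne_zero (Complex.exp_ne_zero _)
    exact mul_ne_zero (by simp [Complex.I_ne_zero]) hz
  rw [sinExpKey z, eq_div_iff hne]
  field_simp

open Complex in
theorem expNe1 (z : ℂ) (hz : Complex.sin z ≠ 0) : Complex.exp (2*z*I) - 1 ≠ 0 := by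
  rw [sinExpKey z]
  exact mul_ne_zero (Complex.exp_ne_zero _) (mul_ne_zero (by simp [Complex.I_ne_zero]) hz)

open Complex in
theorem main_complex (n t : ℕ) (hn : 1 ≤ n) (ht : n = 2*t+1) (φ : ℝ)
    (hsin : ∀ l < n, Real.sin (φ + π * l / n) ≠ 0)
    (hsinn : Real.sin (n * φ) ≠ 0) :
    ∑ l ∈ Finset.range n, (-1:ℂ)^l * (Complex.sin ((φ:ℂ) + (π:ℂ)*(l:ℂ)/(n:ℂ)))⁻¹ =
      (n:ℂ) * (Complex.sin ((n:ℂ)*(φ:ℂ)))⁻¹ := by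
  have hn0 : (n:ℂ) ≠ 0 := by exact_mod_cast (by positivity : (n:ℝ) ≠ 0)
  set m : ℕ := t + 1 with hmdef
  set u : ℂ := Complex.exp ((φ:ℂ) * I) with hu
  set w : ℂ := Complex.exp (((π:ℂ)/(n:ℂ)) * I) with hw
  set x : ℂ := u^2 with hx
  set ζ : ℂ := w^2 with hζ
  -- basic exponential facts
  have hwn : w^n = -1 := by
    rw [hw, ← Complex.exp_nat_mul, show (n:ℂ)*(((π:ℂ)/(n:ℂ))*I) = (π:ℂ)*I by field_simp,
      Complex.exp_pi_mul_I]
  have hζn : ζ^n = 1 := by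
    rw [hζ, show (w^2)^n = (w^n)^2 by ring, hwn]; norm_num
  have hprim : IsPrimitiveRoot ζ n := by
    have h1 := Complex.isPrimitiveRoot_exp n (by omega)
    have h2 : ζ = Complex.exp (2*(π:ℂ)*I/(n:ℂ)) := by
      rw [hζ, hw, sq, ← Complex.exp_add]; congr 1; ring
    rwa [← h2] at h1
  have e1 : ∀ l : ℕ, Complex.exp (((φ:ℂ) + (π:ℂ)*(l:ℂ)/(n:ℂ)) * I) = u * w^l := by
    intro l
    rw [add_mul, Complex.exp_add, hu, hw, ← Complex.exp_nat_mul]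
    congr 2
    ring
  have e2 : ∀ l : ℕ, Complex.exp (2*((φ:ℂ) + (π:ℂ)*(l:ℂ)/(n:ℂ)) * I) = x * ζ^l := by
    intro l
    rw [show (2:ℂ)*((φ:ℂ) + (π:ℂ)*(l:ℂ)/(n:ℂ))*I
        = ((φ:ℂ) + (π:ℂ)*(l:ℂ)/(n:ℂ))*I + ((φ:ℂ) + (π:ℂ)*(l:ℂ)/(n:ℂ))*I by ring,
      Complex.exp_add, e1, hx, hζ]
    ring
  have hsc : ∀ l, l < n → Complex.sin ((φ:ℂ) + (π:ℂ)*(l:ℂ)/(n:ℂ)) ≠ 0 := by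
    intro l hl
    have : ((φ + π * l / n : ℝ) : ℂ) = (φ:ℂ) + (π:ℂ)*(l:ℂ)/(n:ℂ) := by push_cast; ring
    rw [← this, ← Complex.ofReal_sin]
    exact_mod_cast hsin l hl
  have hsnc : Complex.sin ((n:ℂ)*(φ:ℂ)) ≠ 0 := by
    have : ((n * φ : ℝ) : ℂ) = (n:ℂ)*(φ:ℂ) := by push_cast; ring
    rw [← this, ← Complex.ofReal_sin]
    exact_mod_cast hsinn
  have hxz : ∀ l, l < n → x * ζ^l - 1 ≠ 0 := by
    intro l hl
    rw [← e2 l]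
    exact expNe1 _ (hsc l hl)
  have hun : Complex.exp (((n:ℂ)*(φ:ℂ))*I) = u^n := by
    rw [hu, ← Complex.exp_nat_mul]; congr 1; ring
  have hxn : x^n = Complex.exp (2*((n:ℂ)*(φ:ℂ))*I) := by
    rw [hx, hu, ← pow_mul, ← Complex.exp_nat_mul]
    congr 1; push_cast; ring
  have hxn1 : x^n - 1 ≠ 0 := by
    rw [hxn]; exact expNe1 _ hsnc
  -- step 1 : per-term rewrite
  have step1 : ∀ l, l < n → (-1:ℂ)^l * (Complex.sin ((φ:ℂ) + (π:ℂ)*(l:ℂ)/(n:ℂ)))⁻¹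
      = 2*I*u * (ζ^(m*l) / (x*ζ^l - 1)) := by
    intro l hl
    rw [invSin _ (hsc l hl), e1, e2]
    have hpow : (-1:ℂ)^l * w^l = ζ^(m*l) := by
      rw [← hwn, ← pow_mul, ← pow_add, hζ, ← pow_mul,
        show n*l + l = 2*(m*l) by rw [hmdef, ht]; ring]
    linear_combination (2*I*u/(x*ζ^l - 1)) * hpow
  -- step 2 : expand the geometric inverse
  have step2 : ∀ l, l < n → ζ^(m*l) / (x*ζ^l - 1)
      = (∑ k ∈ Finset.range n, ζ^((m+k)*l) * x^k) / (x^n - 1) := by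
    intro l hl
    have hζln : (ζ^l)^n = 1 := by rw [← pow_mul, mul_comm, pow_mul, hζn, one_pow]
    have hg : (∑ k ∈ Finset.range n, (x*ζ^l)^k) * (x*ζ^l - 1) = x^n - 1 := by
      rw [geom_sum_mul]
      congr 1
      rw [mul_pow, hζln, mul_one]
    have key : (x^n - 1) * ζ^(m*l) = (∑ k ∈ Finset.range n, ζ^((m+k)*l) * x^k) * (x*ζ^l - 1) := by
      rw [← hg]
      rw [show (∑ k ∈ Finset.range n, (x*ζ^l)^k) * (x*ζ^l - 1) * ζ^(m*l)
          = (ζ^(m*l) * ∑ k ∈ Finset.range n, (x*ζ^l)^k) * (x*ζ^l - 1) by ring]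
      congr 1
      rw [Finset.mul_sum]
      apply Finset.sum_congr rfl
      intro k _
      rw [mul_pow, ← pow_mul, show (m+k)*l = m*l + l*k by ring, pow_add]
      ring
    rw [div_eq_div_iff (hxz l hl) hxn1]
    linear_combination key
  -- rewrite sum
  rw [Finset.sum_congr rfl (fun l hl => by
    rw [step1 l (Finset.mem_range.mp hl), step2 l (Finset.mem_range.mp hl)])]
  -- pull out constants and swap sums
  have hswap : ∑ l ∈ Finset.range n,
        2*I*u * ((∑ k ∈ Finset.range n, ζ^((m+k)*l) * x^k) / (x^n - 1))
      = (2*I*u/(x^n-1)) * ∑ k ∈ Finset.range n,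
          (∑ l ∈ Finset.range n, (ζ^(m+k))^l) * x^k := by
    calc ∑ l ∈ Finset.range n, 2*I*u * ((∑ k ∈ Finset.range n, ζ^((m+k)*l) * x^k) / (x^n - 1))
        = ∑ l ∈ Finset.range n, ∑ k ∈ Finset.range n,
            (2*I*u/(x^n-1)) * ((ζ^(m+k))^l * x^k) := by
          apply Finset.sum_congr rfl
          intro l _
          rw [Finset.sum_div, Finset.mul_sum]
          apply Finset.sum_congr rfl
          intro k _
          rw [← pow_mul]
          ring
      _ = ∑ k ∈ Finset.range n, ∑ l ∈ Finset.range n,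
            (2*I*u/(x^n-1)) * ((ζ^(m+k))^l * x^k) := Finset.sum_comm
      _ = (2*I*u/(x^n-1)) * ∑ k ∈ Finset.range n,
            (∑ l ∈ Finset.range n, (ζ^(m+k))^l) * x^k := by
          rw [Finset.mul_sum]
          apply Finset.sum_congr rfl
          intro k _
          rw [Finset.sum_mul, Finset.mul_sum]
  rw [hswap]
  -- roots of unity sum
  have hroots : ∀ j : ℕ, (∑ l ∈ Finset.range n, (ζ^j)^l) = if n ∣ j then (n:ℂ) else 0 := by
    intro j
    by_cases hd : n ∣ j
    · obtain ⟨c, rfl⟩ := hd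
      rw [if_pos ⟨c, rfl⟩]
      have : ζ^(n*c) = 1 := by rw [pow_mul, hζn, one_pow]
      rw [this]
      simp
    · rw [if_neg hd, geom_sum_eq (fun h1 => hd ((hprim.pow_eq_one_iff_dvd j).mp h1))]
      have : (ζ^j)^n = 1 := by rw [← pow_mul, mul_comm, pow_mul, hζn, one_pow]
      rw [this]
      simp
  have hsum : ∑ k ∈ Finset.range n, (∑ l ∈ Finset.range n, (ζ^(m+k))^l) * x^k = (n:ℂ) * x^t := by
    rw [Finset.sum_congr rfl (fun k _ => by rw [hroots (m+k)])]
    rw [Finset.sum_eq_single_of_mem t (Finset.mem_range.mpr (by omega))]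
    · simp [show m + t = n by omega]
    · intro k hk hkt
      rw [if_neg ?_, zero_mul]
      rintro ⟨c, hc⟩
      have hk' : k < n := Finset.mem_range.mp hk
      rcases c with _ | _ | c
      · omega
      · omega
      · have h2 : m + k = n*c + 2*n := by rw [hc]; ring
        have h3 : 2*n ≤ m + k := by rw [h2]; exact Nat.le_add_left _ _
        omega
  rw [hsum]
  -- finish
  rw [invSin _ hsnc, hun, ← hxn]
  have huxt : u * x^t = u^n := by
    rw [hx, ← pow_mul, ht]; ring
  rw [div_mul_eq_mul_div, ← mul_div_assoc, div_eq_div_iff hxn1 hxn1]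
  linear_combination (2*I*(n:ℂ)*(x^n-1)) * huxt

theorem alt_csc_sum (n : ℕ) (hn : 1 ≤ n) (hodd : Odd n) (φ : ℝ)
    (h : ∀ l < n, ∀ k : ℤ, φ + π * l / n ≠ k * π) :
    ∑ l ∈ Finset.range n, (-1 : ℝ) ^ l * (Real.sin (φ + π * l / n))⁻¹ =
      n * (Real.sin (n * φ))⁻¹ := by
  have hn0 : (n:ℝ) ≠ 0 := by positivity
  have hsin : ∀ l < n, Real.sin (φ + π * l / n) ≠ 0 := by
    intro l hl hs
    obtain ⟨k, hk⟩ := Real.sin_eq_zero_iff.mp hs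
    exact h l hl k (by linarith)
  have hsinn : Real.sin (n * φ) ≠ 0 := by
    intro hs
    obtain ⟨k, hk⟩ := Real.sin_eq_zero_iff.mp hs
    have hφ : φ = k * π / n := by field_simp at hk ⊢; linarith
    set r : ℤ := k % (n:ℤ) with hr
    set q : ℤ := k / (n:ℤ) with hq
    have hkr : k = (n:ℤ) * q + r := (Int.mul_ediv_add_emod k n).symm
    have hr0 : 0 ≤ r := Int.emod_nonneg k (by exact_mod_cast (by omega : (n:ℤ) ≠ 0))
    have hrn : r < (n:ℤ) := Int.emod_lt_of_pos k (by exact_mod_cast hn)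
    by_cases hr0' : r = 0
    · apply h 0 hn q
      push_cast
      rw [hφ]
      have : (k:ℝ) = n * q := by exact_mod_cast (by omega : k = (n:ℤ)*q)
      rw [this]; field_simp; ring
    · have hl : (n - r).toNat < n := by omega
      apply h (n - r).toNat hl (q+1)
      have hcast : ((n - r).toNat : ℝ) = (n:ℝ) - (r:ℝ) := by
        have : ((n - r).toNat : ℤ) = (n:ℤ) - r := Int.toNat_of_nonneg (by omega)
        exact_mod_cast this
      rw [hφ, hcast]
      have hkr' : (k:ℝ) = (n:ℝ) * q + r := by exact_mod_cast hkr
      rw [hkr']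
      field_simp
      push_cast; ring
  obtain ⟨t, ht⟩ := hodd
  have hmain := main_complex n t hn (by omega) φ hsin hsinn
  apply Complex.ofReal_injective
  push_cast
  convert hmain using 2 with l hl
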